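/- With Γ^(t) and D_i^(t) as above, for each coordinate i ∈ {1,…,n} of the first copy, ‖Γ^(t) ∘ D_i^(t)‖ = ‖Γ ∘ D_i‖, where D_i^(t) = D_i ⊗ J^{⊗(t-1)}. -/

import Mathlib

open Matrix Kronecker

noncomputable def specNorm {n : Type*} [Fintype n] [DecidableEq n] (M : Matrix n n ℝ) : ℝ :=
  ‖Matrix.toEuclideanCLM (𝕜 := ℝ) M‖

def diffMatrix {V ι : Type*} (inp : V → ι → Bool) (i : ι) : Matrix V V ℝ :=
  Matrix.of fun x y => if inp x i ≠ inp y i then (1 : ℝ) else 0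

def Kt (V : Type*) : ℕ → Type _
  | 0 => PUnit
  | t + 1 => V × Kt V t

instance KtFintype (V : Type*) [Fintype V] : ∀ t, Fintype (Kt V t)
  | 0 => inferInstanceAs (Fintype PUnit)
  | t + 1 => letI := KtFintype V t; inferInstanceAs (Fintype (V × Kt V t))

instance KtDecEq (V : Type*) [DecidableEq V] : ∀ t, DecidableEq (Kt V t)
  | 0 => inferInstanceAs (DecidableEq PUnit)
  | t + 1 => letI := KtDecEq V t; inferInstanceAs (DecidableEq (V × Kt V t))

noncomputable def Gt {V : Type*} [Fintype V] [DecidableEq V] (Γ : Matrix V V ℝ) :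
    ∀ t, Matrix (Kt V t) (Kt V t) ℝ
  | 0 => 0
  | t + 1 => Γ ⊗ₖ (1 : Matrix (Kt V t) (Kt V t) ℝ) + (1 : Matrix V V ℝ) ⊗ₖ Gt Γ t

instance KtNonempty (V : Type*) [Nonempty V] : ∀ t, Nonempty (Kt V t)
  | 0 => inferInstanceAs (Nonempty PUnit)
  | t + 1 => letI := KtNonempty V t; inferInstanceAs (Nonempty (V × Kt V t))


lemma norm_kron_one {n m : Type*} [Fintype n] [DecidableEq n] [Fintype m] [DecidableEq m]
    [Nonempty m] (A : Matrix n n ℝ) :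
    ‖Matrix.toEuclideanCLM (𝕜 := ℝ) (A ⊗ₖ (1 : Matrix m m ℝ))‖ =
      ‖Matrix.toEuclideanCLM (𝕜 := ℝ) A‖ := by
  set T := toEuclideanCLM (𝕜 := ℝ) A with hT
  set S := toEuclideanCLM (𝕜 := ℝ) (A ⊗ₖ (1 : Matrix m m ℝ)) with hS
  have keyS : ∀ (x : EuclideanSpace ℝ (n × m)) (i : n) (a : m),
      S x (i, a) = ∑ j, A i j * x (j, a) := by
    intro x i a
    have := congrFun (ofLp_toEuclideanCLM (A ⊗ₖ (1 : Matrix m m ℝ)) x) (i, a)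
    simp only [toLin'_apply, mulVec, dotProduct] at this
    rw [hS, this, Fintype.sum_prod_type]
    congr 1; ext j
    simp [kroneckerMap_apply, one_apply, ite_mul, Finset.sum_ite_eq']
  have keyT : ∀ (x : EuclideanSpace ℝ n) (i : n), T x i = ∑ j, A i j * x j := by
    intro x i
    have := congrFun (ofLp_toEuclideanCLM A x) i
    simpa only [toLin'_apply, mulVec, dotProduct] using this
  apply le_antisymm
  · apply ContinuousLinearMap.opNorm_le_bound _ (norm_nonneg _)
    intro x
    set xa : m → EuclideanSpace ℝ n := fun a => WithLp.toLp 2 (fun j => x (j, a)) with hxa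
    have h1 : ‖S x‖ ^ 2 = ∑ a, ‖T (xa a)‖ ^ 2 := by
      rw [EuclideanSpace.norm_eq, Real.sq_sqrt (by positivity)]
      rw [Fintype.sum_prod_type_right]
      congr 1; ext a
      rw [EuclideanSpace.norm_eq, Real.sq_sqrt (by positivity)]
      congr 1; ext i
      rw [keyS, keyT]
    have h2 : ‖x‖ ^ 2 = ∑ a, ‖xa a‖ ^ 2 := by
      rw [EuclideanSpace.norm_eq, Real.sq_sqrt (by positivity)]
      rw [Fintype.sum_prod_type_right]
      congr 1; ext a
      rw [EuclideanSpace.norm_eq, Real.sq_sqrt (by positivity)]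
    have h3 : ‖S x‖ ^ 2 ≤ (‖T‖ * ‖x‖) ^ 2 := by
      rw [h1, mul_pow, h2, Finset.mul_sum]
      apply Finset.sum_le_sum
      intro a _
      calc ‖T (xa a)‖ ^ 2 ≤ (‖T‖ * ‖xa a‖) ^ 2 := by
            apply pow_le_pow_left₀ (norm_nonneg _) (T.le_opNorm _)
        _ = ‖T‖ ^ 2 * ‖xa a‖ ^ 2 := by ring
    calc ‖S x‖ = Real.sqrt (‖S x‖ ^ 2) := (Real.sqrt_sq (norm_nonneg _)).symm
      _ ≤ Real.sqrt ((‖T‖ * ‖x‖) ^ 2) := Real.sqrt_le_sqrt h3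
      _ = ‖T‖ * ‖x‖ := Real.sqrt_sq (by positivity)
  · apply ContinuousLinearMap.opNorm_le_bound _ (norm_nonneg _)
    intro x
    have a0 : m := Classical.arbitrary m
    set y : EuclideanSpace ℝ (n × m) := WithLp.toLp 2 (fun p => if p.2 = a0 then x p.1 else 0) with hy
    have h4 : ‖y‖ = ‖x‖ := by
      rw [EuclideanSpace.norm_eq, EuclideanSpace.norm_eq]
      congr 1
      rw [Fintype.sum_prod_type_right]
      rw [Finset.sum_eq_single a0]
      · simp [hy]
      · intro b _ hb; simp [hy, hb]
      · simp
    have h5 : ‖S y‖ = ‖T x‖ := by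
      rw [EuclideanSpace.norm_eq, EuclideanSpace.norm_eq]
      congr 1
      rw [Fintype.sum_prod_type_right]
      rw [Finset.sum_eq_single a0]
      · congr 1; ext i
        rw [keyS, keyT]
        simp [hy]
      · intro b _ hb
        have : ∀ i, S y (i, b) = 0 := by
          intro i; rw [keyS]
          simp [hy, hb]
        simp [this]
      · simp
    calc ‖T x‖ = ‖S y‖ := h5.symm
      _ ≤ ‖S‖ * ‖y‖ := S.le_opNorm _
      _ = ‖S‖ * ‖x‖ := by rw [h4]

theorem specNorm_Gt_hadamard_diff {V ι σ : Type*} [Fintype V] [DecidableEq V] [Nonempty V]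
    [Fintype ι] (inp : V → ι → Bool) (f : V → σ) (Γ : Matrix V V ℝ)
    (hsymm : Γ.IsSymm) (hvanish : ∀ x y, f x = f y → Γ x y = 0) (i : ι) (s : ℕ) :
    specNorm ((Gt Γ (s + 1)) ⊙
        ((diffMatrix inp i) ⊗ₖ (Matrix.of fun _ _ : Kt V s => (1 : ℝ)))) =
      specNorm (Γ ⊙ diffMatrix inp i) := by
  have hmat : (Gt Γ (s + 1)) ⊙
        ((diffMatrix inp i) ⊗ₖ (Matrix.of fun _ _ : Kt V s => (1 : ℝ)))
      = (Γ ⊙ diffMatrix inp i) ⊗ₖ (1 : Matrix (Kt V s) (Kt V s) ℝ) := by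
    show (Γ ⊗ₖ (1 : Matrix (Kt V s) (Kt V s) ℝ) + (1 : Matrix V V ℝ) ⊗ₖ Gt Γ s) ⊙ _ = _
    ext ⟨x, a⟩ ⟨y, b⟩
    simp only [Matrix.add_apply, hadamard_apply, kroneckerMap_apply, of_apply, mul_one]
    by_cases hxy : x = y
    · subst hxy
      simp [diffMatrix, one_apply]
    · simp only [one_apply, if_neg hxy, zero_mul, add_zero]
      ring
  rw [hmat]
  exact norm_kron_one (m := Kt V s) (Γ ⊙ diffMatrix inp i)
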